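/- Let n ≥ 1 and q ∈ ℂ with q^j ≠ 1 for all 1 ≤ j ≤ n-1. Then the determinant of the n×n Vandermonde matrix V_q with entries q^{ij} equals Π_{i=0}^{n-1} (-1)^i q^{i(i-1)/2} (q;q)_i. -/

import Mathlib

noncomputable def qPoch (z q : ℂ) (n : ℕ) : ℂ := ∏ i ∈ Finset.range n, (1 - z * q ^ i)

lemma inner_col (q : ℂ) (j : ℕ) :
    ∏ i ∈ Finset.range j, (q ^ j - q ^ i)
      = (-1) ^ j * q ^ (j * (j - 1) / 2) * qPoch q q j := by
  have h1 : ∀ i ∈ Finset.range j, q ^ j - q ^ i = (-1) * q ^ i * (1 - q ^ (j - i)) := by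
    intro i hi
    simp only [Finset.mem_range] at hi
    have : q ^ j = q ^ i * q ^ (j - i) := by
      rw [← pow_add, Nat.add_sub_cancel' hi.le]
    rw [this]; ring
  rw [Finset.prod_congr rfl h1]
  rw [Finset.prod_mul_distrib, Finset.prod_mul_distrib, Finset.prod_const,
    Finset.prod_pow_eq_pow_sum, Finset.sum_range_id]
  congr 1
  · simp
  rw [qPoch]
  have h2 : ∀ k ∈ Finset.range j, 1 - q * q ^ k = (fun i => 1 - q ^ (j - i)) (j - 1 - k) := by
    intro k hk
    simp only [Finset.mem_range] at hk
    have : j - (j - 1 - k) = k + 1 := by omega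
    simp [this, pow_succ, mul_comm]
  rw [Finset.prod_congr rfl h2]
  exact (Finset.prod_range_reflect (fun i => 1 - q ^ (j - i)) j).symm

theorem stmt17 (n : ℕ) (hn : 1 ≤ n) (q : ℂ) (hq : ∀ j : ℕ, 1 ≤ j → j ≤ n - 1 → q ^ j ≠ 1) :
    (Matrix.of fun i j : Fin n => q ^ ((i : ℕ) * (j : ℕ))).det =
      ∏ i ∈ Finset.range n, ((-1) ^ i * q ^ (i * (i - 1) / 2) * qPoch q q i) := by
  have hm : (Matrix.of fun i j : Fin n => q ^ ((i : ℕ) * (j : ℕ)))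
      = Matrix.vandermonde (fun i : Fin n => q ^ (i : ℕ)) := by
    ext i j
    simp [Matrix.vandermonde, ← pow_mul]
  rw [hm, Matrix.det_vandermonde]
  rw [Finset.prod_comm' (t' := Finset.univ) (s' := fun j => Finset.Iio j)
    (by intro x y; simp [Finset.mem_Ioi, Finset.mem_Iio, and_comm])]
  rw [← Fin.prod_univ_eq_prod_range
    (fun i => (-1 : ℂ) ^ i * q ^ (i * (i - 1) / 2) * qPoch q q i)]
  refine Finset.prod_congr rfl fun j _ => ?_
  rw [← inner_col q (j : ℕ)]
  rw [← Nat.Iio_eq_range, ← Fin.map_valEmbedding_Iio (a := j), Finset.prod_map]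
  rfl
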